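/- Exact PDAM equality for signed loss: For any round with learned model M̂, learned policy π̂, expert π⋆, and true dynamics M⋆, we have (1−γ)[J^ω_{M⋆}(π̂) − J^ω_{M⋆}(π⋆)] = γ·ℓ^{sn}(M̂) + E_{s∼d_{ω,π⋆}}[V^{π̂}_{M̂}(s) − E_{a∼π⋆(s)}Q^{π̂}_{M̂}(s,a)], where ℓ^{sn}(M̂) = E_{(s,a)∼D_{ω,π̂}}[E_{s'∼M⋆(s,a)}V^{π̂}_{M̂}(s') − E_{s''∼M̂(s,a)}V^{π̂}_{M̂}(s'')] + E_{(s,a)∼D_{ω,π⋆}}[E_{s''∼M̂(s,a)}V^{π̂}_{M̂}(s'') − E_{s'∼M⋆(s,a)}V^{π̂}_{M̂}(s')]. -/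
import Mathlib


open Finset

section
variable {S A : Type*} [Fintype S] [Fintype A]

lemma pdam_factor_sum (D π : S → A → ℝ) (b : S → ℝ)
    (hD : ∀ s a, D s a = π s a * b s) (q : S → A → ℝ) :
    ∑ s, ∑ a, D s a * q s a = ∑ s, b s * ∑ a, π s a * q s a := by
  refine Finset.sum_congr rfl fun s _ => ?_
  rw [Finset.mul_sum]
  exact Finset.sum_congr rfl fun a _ => by rw [hD]; ring

lemma pdam_base_expand (γ : ℝ) (ω : S → ℝ) (D : S → A → ℝ) (P : S → A → S → ℝ)
    (f : S → ℝ) :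
    ∑ s, ((1 - γ) * ω s + γ * ∑ s0, ∑ a0, D s0 a0 * P s0 a0 s) * f s
      = (1 - γ) * ∑ s, ω s * f s
        + γ * ∑ s, ∑ a, D s a * ∑ s', P s a s' * f s' := by
  have h1 : ∀ s : S, ((1 - γ) * ω s + γ * ∑ s0, ∑ a0, D s0 a0 * P s0 a0 s) * f s
      = (1 - γ) * (ω s * f s) + γ * ∑ s0, ∑ a0, D s0 a0 * (P s0 a0 s * f s) := by
    intro s
    simp only [Finset.sum_mul, mul_assoc, add_mul]

  simp only [h1]
  rw [Finset.sum_add_distrib, ← Finset.mul_sum, ← Finset.mul_sum]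
  congr 1
  congr 1
  rw [Finset.sum_comm]
  exact Finset.sum_congr rfl fun s _ => by
    rw [Finset.sum_comm]
    exact Finset.sum_congr rfl fun a _ => by rw [Finset.mul_sum]

lemma pdam_split_sum (D q g : S → A → ℝ) (γ : ℝ) :
    ∑ s, ∑ a, D s a * (q s a + γ * g s a)
      = (∑ s, ∑ a, D s a * q s a) + γ * ∑ s, ∑ a, D s a * g s a := by
  simp only [mul_add, Finset.sum_add_distrib, Finset.mul_sum]
  ring_nf
  congr 1
  exact Finset.sum_congr rfl fun s _ => Finset.sum_congr rfl fun a _ => by ring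

lemma pdam_diff_sum (D x y : S → A → ℝ) :
    ∑ s, ∑ a, D s a * (x s a - y s a)
      = (∑ s, ∑ a, D s a * x s a) - ∑ s, ∑ a, D s a * y s a := by
  simp [mul_sub, Finset.sum_sub_distrib]
end

/-- Exact PDAM equality for the signed loss:
`(1−γ)[J^ω_{M⋆}(π̂) − J^ω_{M⋆}(π⋆)] = γ·ℓ^{sn}(M̂) + E_{s∼d_{ω,π⋆}}[V^{π̂}_{M̂}(s) − E_{a∼π⋆}Q^{π̂}_{M̂}(s,a)]`. -/
theorem pdam_signed_loss_equality
    {S A : Type*} [Fintype S] [Fintype A]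
    (γ : ℝ) (hγ0 : 0 ≤ γ) (hγ1 : γ < 1)
    (c : S → A → ℝ) (hc0 : ∀ s a, 0 ≤ c s a) (hc1 : ∀ s a, c s a ≤ 1)
    (ω : S → ℝ) (hω0 : ∀ s, 0 ≤ ω s) (hω1 : ∑ s, ω s = 1)
    (pihat pistar : S → A → ℝ)
    (hpihat0 : ∀ s a, 0 ≤ pihat s a) (hpihat1 : ∀ s, ∑ a, pihat s a = 1)
    (hpistar0 : ∀ s a, 0 ≤ pistar s a) (hpistar1 : ∀ s, ∑ a, pistar s a = 1)
    (Mstar Mhat : S → A → S → ℝ)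
    (hMstar0 : ∀ s a s', 0 ≤ Mstar s a s') (hMstar1 : ∀ s a, ∑ s', Mstar s a s' = 1)
    (hMhat0 : ∀ s a s', 0 ≤ Mhat s a s') (hMhat1 : ∀ s a, ∑ s', Mhat s a s' = 1)
    (VhH VhS VsS : S → ℝ)
    (hVhH : ∀ s, VhH s = ∑ a, pihat s a * (c s a + γ * ∑ s', Mhat s a s' * VhH s'))
    (hVhS : ∀ s, VhS s = ∑ a, pihat s a * (c s a + γ * ∑ s', Mstar s a s' * VhS s'))
    (hVsS : ∀ s, VsS s = ∑ a, pistar s a * (c s a + γ * ∑ s', Mstar s a s' * VsS s'))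
    (Dh Ds : S → A → ℝ)
    (hDh : ∀ s a, Dh s a = pihat s a *
      ((1 - γ) * ω s + γ * ∑ s0, ∑ a0, Dh s0 a0 * Mstar s0 a0 s))
    (hDs : ∀ s a, Ds s a = pistar s a *
      ((1 - γ) * ω s + γ * ∑ s0, ∑ a0, Ds s0 a0 * Mstar s0 a0 s))
    -- the signed loss of the learned model M̂
    (lsn : ℝ)
    (hlsn : lsn =
        (∑ s, ∑ a, Dh s a *
          ((∑ s', Mstar s a s' * VhH s') - ∑ s'', Mhat s a s'' * VhH s''))
      + ∑ s, ∑ a, Ds s a *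
          ((∑ s'', Mhat s a s'' * VhH s'') - ∑ s', Mstar s a s' * VhH s')) :
    (1 - γ) * ((∑ s, ω s * VhS s) - ∑ s, ω s * VsS s)
      = γ * lsn
        + ∑ s, (∑ a, Ds s a) *
            (VhH s - ∑ a, pistar s a * (c s a + γ * ∑ s', Mhat s a s' * VhH s')) := by
  -- F1 : on-policy value identity for (π̂, M⋆)
  have F1 : ∑ s, ∑ a, Dh s a * c s a = (1 - γ) * ∑ s, ω s * VhS s := by
    have h1 : ∑ s, ∑ a, Dh s a * (c s a + γ * ∑ s', Mstar s a s' * VhS s')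
        = ∑ s, ((1 - γ) * ω s + γ * ∑ s0, ∑ a0, Dh s0 a0 * Mstar s0 a0 s) *
            ∑ a, pihat s a * (c s a + γ * ∑ s', Mstar s a s' * VhS s') :=
      pdam_factor_sum Dh pihat _ hDh _
    have h2 : ∑ s, ((1 - γ) * ω s + γ * ∑ s0, ∑ a0, Dh s0 a0 * Mstar s0 a0 s) *
            ∑ a, pihat s a * (c s a + γ * ∑ s', Mstar s a s' * VhS s')
        = ∑ s, ((1 - γ) * ω s + γ * ∑ s0, ∑ a0, Dh s0 a0 * Mstar s0 a0 s) * VhS s :=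
      Finset.sum_congr rfl fun s _ => by rw [← hVhS]
    have h3 := pdam_base_expand γ ω Dh Mstar VhS
    have h4 : ∑ s, ∑ a, Dh s a * (c s a + γ * ∑ s', Mstar s a s' * VhS s')
        = (∑ s, ∑ a, Dh s a * c s a)
          + γ * ∑ s, ∑ a, Dh s a * ∑ s', Mstar s a s' * VhS s' :=
      pdam_split_sum Dh c _ γ
    linarith
  -- F2 : on-policy value identity for (π⋆, M⋆)
  have F2 : ∑ s, ∑ a, Ds s a * c s a = (1 - γ) * ∑ s, ω s * VsS s := by
    have h1 : ∑ s, ∑ a, Ds s a * (c s a + γ * ∑ s', Mstar s a s' * VsS s')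
        = ∑ s, ((1 - γ) * ω s + γ * ∑ s0, ∑ a0, Ds s0 a0 * Mstar s0 a0 s) *
            ∑ a, pistar s a * (c s a + γ * ∑ s', Mstar s a s' * VsS s') :=
      pdam_factor_sum Ds pistar _ hDs _
    have h2 : ∑ s, ((1 - γ) * ω s + γ * ∑ s0, ∑ a0, Ds s0 a0 * Mstar s0 a0 s) *
            ∑ a, pistar s a * (c s a + γ * ∑ s', Mstar s a s' * VsS s')
        = ∑ s, ((1 - γ) * ω s + γ * ∑ s0, ∑ a0, Ds s0 a0 * Mstar s0 a0 s) * VsS s :=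
      Finset.sum_congr rfl fun s _ => by rw [← hVsS]
    have h3 := pdam_base_expand γ ω Ds Mstar VsS
    have h4 : ∑ s, ∑ a, Ds s a * (c s a + γ * ∑ s', Mstar s a s' * VsS s')
        = (∑ s, ∑ a, Ds s a * c s a)
          + γ * ∑ s, ∑ a, Ds s a * ∑ s', Mstar s a s' * VsS s' :=
      pdam_split_sum Ds c _ γ
    linarith
  -- F3 : simulation identity under Dh with model-mismatch term
  have F3 : ∑ s, ∑ a, Dh s a * c s a
      = (1 - γ) * ∑ s, ω s * VhH s
        + γ * (∑ s, ∑ a, Dh s a * ∑ s', Mstar s a s' * VhH s')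
        - γ * (∑ s, ∑ a, Dh s a * ∑ s', Mhat s a s' * VhH s') := by
    have h1 : ∑ s, ∑ a, Dh s a * (c s a + γ * ∑ s', Mhat s a s' * VhH s')
        = ∑ s, ((1 - γ) * ω s + γ * ∑ s0, ∑ a0, Dh s0 a0 * Mstar s0 a0 s) *
            ∑ a, pihat s a * (c s a + γ * ∑ s', Mhat s a s' * VhH s') :=
      pdam_factor_sum Dh pihat _ hDh _
    have h2 : ∑ s, ((1 - γ) * ω s + γ * ∑ s0, ∑ a0, Dh s0 a0 * Mstar s0 a0 s) *
            ∑ a, pihat s a * (c s a + γ * ∑ s', Mhat s a s' * VhH s')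
        = ∑ s, ((1 - γ) * ω s + γ * ∑ s0, ∑ a0, Dh s0 a0 * Mstar s0 a0 s) * VhH s :=
      Finset.sum_congr rfl fun s _ => by rw [← hVhH]
    have h3 := pdam_base_expand γ ω Dh Mstar VhH
    have h4 : ∑ s, ∑ a, Dh s a * (c s a + γ * ∑ s', Mhat s a s' * VhH s')
        = (∑ s, ∑ a, Dh s a * c s a)
          + γ * ∑ s, ∑ a, Dh s a * ∑ s', Mhat s a s' * VhH s' :=
      pdam_split_sum Dh c _ γ
    linarith
  -- marginal of Ds equals its base
  have h5 : ∀ s, (∑ a, Ds s a)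
      = (1 - γ) * ω s + γ * ∑ s0, ∑ a0, Ds s0 a0 * Mstar s0 a0 s := by
    intro s
    rw [show (∑ a, Ds s a) = ∑ a, pistar s a *
        ((1 - γ) * ω s + γ * ∑ s0, ∑ a0, Ds s0 a0 * Mstar s0 a0 s) from
      Finset.sum_congr rfl fun a _ => hDs s a]
    rw [← Finset.sum_mul, hpistar1, one_mul]
  -- F4 : simulation identity under Ds with mismatch and advantage terms
  have F4 : ∑ s, ∑ a, Ds s a * c s a
      = (1 - γ) * ∑ s, ω s * VhH s
        + γ * (∑ s, ∑ a, Ds s a * ∑ s', Mstar s a s' * VhH s')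
        - γ * (∑ s, ∑ a, Ds s a * ∑ s', Mhat s a s' * VhH s')
        - ∑ s, (∑ a, Ds s a) *
            (VhH s - ∑ a, pistar s a * (c s a + γ * ∑ s', Mhat s a s' * VhH s')) := by
    have h1 : ∑ s, ∑ a, Ds s a * (c s a + γ * ∑ s', Mhat s a s' * VhH s')
        = ∑ s, ((1 - γ) * ω s + γ * ∑ s0, ∑ a0, Ds s0 a0 * Mstar s0 a0 s) *
            ∑ a, pistar s a * (c s a + γ * ∑ s', Mhat s a s' * VhH s') :=
      pdam_factor_sum Ds pistar _ hDs _
    have h2 : ∑ s, ((1 - γ) * ω s + γ * ∑ s0, ∑ a0, Ds s0 a0 * Mstar s0 a0 s) *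
            ∑ a, pistar s a * (c s a + γ * ∑ s', Mhat s a s' * VhH s')
        = (∑ s, ((1 - γ) * ω s + γ * ∑ s0, ∑ a0, Ds s0 a0 * Mstar s0 a0 s) * VhH s)
          - ∑ s, (∑ a, Ds s a) *
              (VhH s - ∑ a, pistar s a * (c s a + γ * ∑ s', Mhat s a s' * VhH s')) := by
      rw [← Finset.sum_sub_distrib]
      exact Finset.sum_congr rfl fun s _ => by rw [h5 s]; ring
    have h3 := pdam_base_expand γ ω Ds Mstar VhH
    have h4 : ∑ s, ∑ a, Ds s a * (c s a + γ * ∑ s', Mhat s a s' * VhH s')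
        = (∑ s, ∑ a, Ds s a * c s a)
          + γ * ∑ s, ∑ a, Ds s a * ∑ s', Mhat s a s' * VhH s' :=
      pdam_split_sum Ds c _ γ
    linarith
  -- expand γ·lsn
  have hT1 := pdam_diff_sum Dh (fun s a => ∑ s', Mstar s a s' * VhH s')
    (fun s a => ∑ s', Mhat s a s' * VhH s')
  have hT2 := pdam_diff_sum Ds (fun s a => ∑ s', Mhat s a s' * VhH s')
    (fun s a => ∑ s', Mstar s a s' * VhH s')
  have hγl : γ * lsn
      = γ * (∑ s, ∑ a, Dh s a * ∑ s', Mstar s a s' * VhH s')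
        - γ * (∑ s, ∑ a, Dh s a * ∑ s', Mhat s a s' * VhH s')
        + γ * (∑ s, ∑ a, Ds s a * ∑ s', Mhat s a s' * VhH s')
        - γ * (∑ s, ∑ a, Ds s a * ∑ s', Mstar s a s' * VhH s') := by
    rw [hlsn]
    rw [show (∑ s, ∑ a, Dh s a *
          ((∑ s', Mstar s a s' * VhH s') - ∑ s'', Mhat s a s'' * VhH s''))
        = (∑ s, ∑ a, Dh s a * ∑ s', Mstar s a s' * VhH s')
          - ∑ s, ∑ a, Dh s a * ∑ s', Mhat s a s' * VhH s' from hT1]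
    rw [show (∑ s, ∑ a, Ds s a *
          ((∑ s'', Mhat s a s'' * VhH s'') - ∑ s', Mstar s a s' * VhH s'))
        = (∑ s, ∑ a, Ds s a * ∑ s', Mhat s a s' * VhH s')
          - ∑ s, ∑ a, Ds s a * ∑ s', Mstar s a s' * VhH s' from hT2]
    ring
  rw [mul_sub]
  linarith
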